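/- Let (Ω, F, P) be a probability space with a filtration (F_t)_{t=0}^{T}, and let (X_t)_{t=1}^{T} be a sequence of real-valued random variables such that X_t is F_t-measurable and exp(X_t) is integrable for each t. Then for every δ ∈ (0, 1), with probability at least 1 − δ, for all T′ ≤ T simultaneously, Σ_{t=1}^{T′} X_t ≤ Σ_{t=1}^{T′} log E[exp(X_t) | F_{t−1}] + log(1/δ). -/

import Mathlib

open MeasureTheory Filter
open scoped ENNReal NNReal

/-- Monotone convergence giving integrability of the limit. -/
lemma mono_integrable {Ω : Type*} {m0 : MeasurableSpace Ω} {μ : Measure Ω}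
    {F : ℕ → Ω → ℝ} {G : Ω → ℝ} {c : ℝ} (hc : 0 ≤ c)
    (hFi : ∀ n, Integrable (F n) μ) (hF0 : ∀ n, 0 ≤ᵐ[μ] F n)
    (hmono : ∀ᵐ ω ∂μ, Monotone fun n => F n ω)
    (hlim : ∀ᵐ ω ∂μ, Tendsto (fun n => F n ω) atTop (nhds (G ω)))
    (hG : AEStronglyMeasurable G μ) (hle : ∀ n, ∫ ω, F n ω ∂μ ≤ c) :
    Integrable G μ ∧ ∫ ω, G ω ∂μ ≤ c := by
  have hG0 : 0 ≤ᵐ[μ] G := by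
    filter_upwards [ae_all_iff.2 hF0, hlim] with ω h1 h2
    exact ge_of_tendsto' h2 h1
  have heq : ∀ᵐ ω ∂μ, ENNReal.ofReal (G ω) = ⨆ n, ENNReal.ofReal (F n ω) := by
    filter_upwards [hmono, hlim] with ω h1 h2
    have ht : Tendsto (fun n => ENNReal.ofReal (F n ω)) atTop (nhds (ENNReal.ofReal (G ω))) :=
      (ENNReal.continuous_ofReal.tendsto _).comp h2
    have hm : Monotone fun n => ENNReal.ofReal (F n ω) :=
      fun a b hab => ENNReal.ofReal_le_ofReal (h1 hab)
    exact tendsto_nhds_unique ht (tendsto_atTop_iSup hm)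
  have key : ∫⁻ ω, ENNReal.ofReal (G ω) ∂μ ≤ ENNReal.ofReal c := by
    calc ∫⁻ ω, ENNReal.ofReal (G ω) ∂μ
        = ∫⁻ ω, ⨆ n, ENNReal.ofReal (F n ω) ∂μ := lintegral_congr_ae heq
      _ = ⨆ n, ∫⁻ ω, ENNReal.ofReal (F n ω) ∂μ := by
          refine lintegral_iSup' (fun n => ENNReal.measurable_ofReal.comp_aemeasurable
            (hFi n).aemeasurable) ?_
          filter_upwards [hmono] with ω h1
          exact fun a b hab => ENNReal.ofReal_le_ofReal (h1 hab)
      _ ≤ ENNReal.ofReal c := by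
          refine iSup_le fun n => ?_
          rw [← ofReal_integral_eq_lintegral_ofReal (hFi n) (hF0 n)]
          exact ENNReal.ofReal_le_ofReal (hle n)
  have hGi : Integrable G μ := by
    refine ⟨hG, ?_⟩
    rw [hasFiniteIntegral_iff_ofReal hG0]
    exact key.trans_lt ENNReal.ofReal_lt_top
  refine ⟨hGi, ?_⟩
  rw [integral_eq_lintegral_of_nonneg_ae hG0 hG]
  exact ENNReal.toReal_le_of_le_ofReal hc key


/-- Integrability of (m-measurable nonneg g) * (integrable nonneg φ) via truncations gn ↑ g. -/
lemma aux_int {Ω : Type*} {m0 : MeasurableSpace Ω} {μ : Measure Ω} [IsProbabilityMeasure μ]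
    {m : MeasurableSpace Ω} (hm : m ≤ m0)
    {φ g : Ω → ℝ} {gn : ℕ → Ω → ℝ} {c : ℝ} (hc : 0 ≤ c)
    (hφ : Integrable φ μ) (hφ0 : ∀ ω, 0 ≤ φ ω)
    (hgnm : ∀ n, StronglyMeasurable[m] (gn n))
    (hgn0 : ∀ n ω, 0 ≤ gn n ω)
    (hbd : ∀ n, ∃ C, ∀ ω, ‖gn n ω‖ ≤ C)
    (hmono : ∀ ω, Monotone fun n => gn n ω)
    (hlim : ∀ᵐ ω ∂μ, Tendsto (fun n => gn n ω) atTop (nhds (g ω)))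
    (hgmeas : AEStronglyMeasurable g μ)
    (hInt : ∀ n, ∫ ω, gn n ω * (μ[φ|m]) ω ∂μ ≤ c) :
    Integrable (fun ω => g ω * φ ω) μ ∧ ∫ ω, g ω * φ ω ∂μ ≤ c := by
  have hFi : ∀ n, Integrable (fun ω => gn n ω * φ ω) μ :=
    fun n => hφ.bdd_mul (c := (hbd n).choose) ((hgnm n).mono hm).aestronglyMeasurable
        (Eventually.of_forall (hbd n).choose_spec)
  have hle : ∀ n, ∫ ω, gn n ω * φ ω ∂μ ≤ c := by
    intro n
    have h1 : μ[gn n * φ|m] =ᵐ[μ] gn n * μ[φ|m] :=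
      condExp_mul_of_stronglyMeasurable_left (hgnm n) (hFi n) hφ
    have h2 : ∫ ω, gn n ω * φ ω ∂μ = ∫ ω, (μ[gn n * φ|m]) ω ∂μ :=
      (integral_condExp hm).symm
    rw [h2, integral_congr_ae h1]
    exact hInt n
  exact mono_integrable hc hFi (fun n => Eventually.of_forall fun ω => mul_nonneg (hgn0 n ω) (hφ0 ω))
    (Eventually.of_forall fun ω a b hab =>
      mul_le_mul_of_nonneg_right (hmono ω hab) (hφ0 ω))
    (by filter_upwards [hlim] with ω h using h.mul_const _)
    ((hgmeas.mono hm).mul hφ.1) hle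

lemma condexp_pos_of_pos {Ω : Type*} {m0 : MeasurableSpace Ω} {μ : Measure Ω}
    [IsProbabilityMeasure μ] {m : MeasurableSpace Ω} (hm : m ≤ m0)
    {f : Ω → ℝ} (hf : Integrable f μ) (hf0 : ∀ ω, 0 < f ω) :
    ∀ᵐ ω ∂μ, 0 < (μ[f|m]) ω := by
  have hgm : StronglyMeasurable[m] (μ[f|m]) := stronglyMeasurable_condExp
  set A : Set Ω := {ω | (μ[f|m]) ω ≤ 0} with hA_def
  have hA : MeasurableSet[m] A := hgm.measurable measurableSet_Iic
  have h1 : ∫ ω in A, (μ[f|m]) ω ∂μ = ∫ ω in A, f ω ∂μ := setIntegral_condExp hm hf hA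
  have h2 : ∫ ω in A, (μ[f|m]) ω ∂μ ≤ 0 :=
    @setIntegral_nonpos Ω m0 μ _ A (hm A hA) (fun ω hω => hω)
  have hμA : μ A = 0 := by
    by_contra h
    have h3 : 0 < ∫ ω in A, f ω ∂μ := by
      rw [@setIntegral_pos_iff_support_of_nonneg_ae Ω m0 A μ f
        (Eventually.of_forall fun ω => (hf0 ω).le) (hf.restrict (s := A))]
      have : Function.support f = Set.univ := by
        ext ω; simp [Function.support, (hf0 ω).ne']
      rw [this, Set.univ_inter]
      exact pos_iff_ne_zero.mpr h
    rw [h1] at h2; linarith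
  rw [ae_iff]
  convert hμA using 2
  ext ω; simp [hA_def, not_lt]

/-- Ville-type uniform martingale exponential inequality. -/
theorem stmt_8 {Ω : Type*} {m0 : MeasurableSpace Ω} (μ : Measure Ω) [IsProbabilityMeasure μ]
    (T : ℕ) (ℱ : Filtration ℕ m0) (X : ℕ → Ω → ℝ)
    (hadapted : ∀ t, Measurable[ℱ t] (X t))
    (hint : ∀ t, Integrable (fun ω => Real.exp (X t ω)) μ)
    (δ : ℝ) (hδ : δ ∈ Set.Ioo (0:ℝ) 1) :
    1 - δ ≤ (μ {ω | ∀ T' ≤ T,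
        ∑ t ∈ Finset.Icc 1 T', X t ω ≤
          ∑ t ∈ Finset.Icc 1 T',
            Real.log ((μ[fun ω' => Real.exp (X t ω') | ℱ (t - 1)]) ω)
          + Real.log (1 / δ)}).toReal := by
  obtain ⟨hδ0, hδ1⟩ := hδ
  set Z : ℕ → Ω → ℝ := fun t => μ[fun ω' => Real.exp (X t ω') | ℱ (t-1)] with hZdef
  have hZm : ∀ t, StronglyMeasurable[ℱ (t-1)] (Z t) := fun t => stronglyMeasurable_condExp
  have hZpos : ∀ t, ∀ᵐ ω ∂μ, 0 < Z t ω := fun t =>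
    condexp_pos_of_pos (ℱ.le _) (hint t) (fun ω => Real.exp_pos _)
  set W : ℕ → Ω → ℝ := fun t ω => max (Z t ω) 0 with hWdef
  have hWm : ∀ t, Measurable[ℱ (t-1)] (W t) := fun t =>
    ((hZm t).measurable.max measurable_const)
  set R : ℕ → Ω → ℝ := fun t ω => (W t ω)⁻¹ * Real.exp (X t ω) with hRdef
  have hR0 : ∀ t ω, 0 ≤ R t ω := fun t ω =>
    mul_nonneg (inv_nonneg.2 (le_max_right _ _)) (Real.exp_pos _).le
  have hRm : ∀ t, Measurable[ℱ t] (R t) := fun t =>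
    (((hWm t).mono (ℱ.mono (Nat.sub_le t 1)) le_rfl).inv).mul
      (Real.measurable_exp.comp (hadapted t))
  -- integrability of R t
  have hRint : ∀ t, Integrable (R t) μ := by
    intro t
    refine (aux_int (μ := μ) (ℱ.le (t-1)) zero_le_one (hint t)
      (fun ω => (Real.exp_pos _).le)
      (gn := fun n ω => (max (W t ω) (1/(n+1)))⁻¹)
      (g := fun ω => (W t ω)⁻¹)
      (fun n => (((hWm t).max measurable_const).inv).stronglyMeasurable)
      (fun n ω => inv_nonneg.2 (le_max_of_le_right (by positivity)))
      (fun n => ⟨n+1, fun ω => ?_⟩) (fun ω a b hab => ?_) ?_ ?_ ?_).1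
    · have h1 : (0:ℝ) < 1/(n+1) := by positivity
      calc ‖(max (W t ω) (1/(n+1:ℝ)))⁻¹‖
          = (max (W t ω) (1/(n+1:ℝ)))⁻¹ :=
            Real.norm_of_nonneg (inv_nonneg.2 (le_max_of_le_right h1.le))
        _ ≤ (1/(n+1:ℝ))⁻¹ := inv_anti₀ h1 (le_max_right _ _)
        _ = n+1 := by rw [one_div, inv_inv]
    · have h2 : (0:ℝ) < 1/(b+1) := by positivity
      refine inv_anti₀ (lt_of_lt_of_le h2 (le_max_right _ _)) ?_
      refine max_le_max le_rfl (one_div_le_one_div_of_le (by positivity) ?_)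
      have : (a:ℝ) ≤ b := Nat.cast_le.2 hab
      linarith
    · filter_upwards [hZpos t] with ω hω
      have hWpos : 0 < W t ω := lt_max_iff.2 (Or.inl hω)
      obtain ⟨N, hN⟩ := exists_nat_gt (1/(W t ω))
      refine Tendsto.congr' ?_ tendsto_const_nhds
      filter_upwards [eventually_ge_atTop N] with n hn
      have hN' : 1/(W t ω) < (n:ℝ)+1 := by
        refine hN.trans_le ?_
        have : (N:ℝ) ≤ n := Nat.cast_le.2 hn
        linarith
      have hle : 1/((n:ℝ)+1) ≤ W t ω := ((one_div_lt hWpos (by positivity)).1 hN').le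
      rw [max_eq_left hle]
    · exact ((hWm t).inv).aestronglyMeasurable
    · intro n
      have hb : ∀ᵐ ω ∂μ, (max (W t ω) (1/(n+1:ℝ)))⁻¹ *
          (μ[fun ω' => Real.exp (X t ω')|ℱ (t-1)]) ω ≤ 1 := by
        filter_upwards [hZpos t] with ω hω
        have hw : W t ω = Z t ω := max_eq_left hω.le
        have hmaxpos : (0:ℝ) < max (W t ω) (1/(n+1)) :=
          lt_max_of_lt_right (by positivity)
        calc (max (W t ω) (1/(n+1:ℝ)))⁻¹ * (μ[fun ω' => Real.exp (X t ω')|ℱ (t-1)]) ω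
            = (max (W t ω) (1/(n+1:ℝ)))⁻¹ * Z t ω := rfl
          _ ≤ (max (W t ω) (1/(n+1:ℝ)))⁻¹ * max (W t ω) (1/(n+1:ℝ)) := by
              refine mul_le_mul_of_nonneg_left ?_ (inv_nonneg.2 hmaxpos.le)
              rw [← hw]; exact le_max_left _ _
          _ = 1 := inv_mul_cancel₀ hmaxpos.ne'
      have hi : Integrable (fun ω => (max (W t ω) (1/(n+1:ℝ)))⁻¹ *
          (μ[fun ω' => Real.exp (X t ω')|ℱ (t-1)]) ω) μ := by
        refine integrable_condExp.bdd_mul (c := n+1) ?_ (Eventually.of_forall fun ω => ?_)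
        · exact ((((hWm t).max measurable_const).inv).mono (ℱ.le _) le_rfl).aestronglyMeasurable
        · have h1 : (0:ℝ) < 1/(n+1) := by positivity
          calc ‖(max (W t ω) (1/(n+1:ℝ)))⁻¹‖
              = (max (W t ω) (1/(n+1:ℝ)))⁻¹ :=
                Real.norm_of_nonneg (inv_nonneg.2 (le_max_of_le_right h1.le))
            _ ≤ (1/(n+1:ℝ))⁻¹ := inv_anti₀ h1 (le_max_right _ _)
            _ = n+1 := by rw [one_div, inv_inv]
      calc ∫ ω, (max (W t ω) (1/(n+1:ℝ)))⁻¹ *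
              (μ[fun ω' => Real.exp (X t ω')|ℱ (t-1)]) ω ∂μ
          ≤ ∫ _ω, (1:ℝ) ∂μ := integral_mono_ae hi (integrable_const 1) hb
        _ = 1 := by simp
  -- conditional expectation of R is 1
  have hRcond : ∀ t, μ[R t|ℱ (t-1)] =ᵐ[μ] fun _ => 1 := by
    intro t
    have h1 : μ[(fun ω => (W t ω)⁻¹) * (fun ω => Real.exp (X t ω))|ℱ (t-1)] =ᵐ[μ]
        (fun ω => (W t ω)⁻¹) * μ[fun ω => Real.exp (X t ω)|ℱ (t-1)] :=
      condExp_mul_of_stronglyMeasurable_left ((hWm t).inv.stronglyMeasurable) (hRint t) (hint t)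
    refine h1.trans ?_
    filter_upwards [hZpos t] with ω hω
    have hw : W t ω = Z t ω := max_eq_left hω.le
    show (W t ω)⁻¹ * Z t ω = 1
    rw [hw]; exact inv_mul_cancel₀ hω.ne'
  -- the likelihood ratio process
  set M : ℕ → Ω → ℝ := fun n ω => ∏ t ∈ Finset.Icc 1 n, R t ω with hMdef
  have hMsucc : ∀ n ω, M (n+1) ω = M n ω * R (n+1) ω := fun n ω =>
    Finset.prod_Icc_succ_top (Nat.succ_le_succ (Nat.zero_le n)) _
  have hMnn : ∀ n ω, 0 ≤ M n ω := fun n ω =>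
    Finset.prod_nonneg fun t _ => hR0 t ω
  have hMadp : ∀ n, StronglyMeasurable[ℱ n] (M n) := by
    intro n
    refine (Finset.measurable_prod _ fun t ht => ?_).stronglyMeasurable
    exact (hRm t).mono (ℱ.mono (Finset.mem_Icc.1 ht).2) le_rfl
  have hcondsucc : ∀ n, μ[R (n+1)|ℱ n] =ᵐ[μ] fun _ => 1 := by
    intro n; simpa using hRcond (n+1)
  have hMkey : ∀ n, Integrable (M n) μ ∧ ∫ ω, M n ω ∂μ = 1 := by
    intro n
    induction n with
    | zero =>
        constructor
        · simpa [hMdef] using (integrable_const (1:ℝ) (μ := μ))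
        · simp [hMdef]
    | succ n ih =>
        obtain ⟨ih1, ih2⟩ := ih
        have hMeq : M (n+1) = fun ω => M n ω * R (n+1) ω := funext (hMsucc n)
        have hIc : Integrable (fun ω => M n ω * R (n+1) ω) μ := by
          refine (aux_int (μ := μ) (ℱ.le n) zero_le_one (hRint (n+1)) (hR0 (n+1))
            (gn := fun N ω => min (M n ω) N) (g := M n)
            (fun N => ((hMadp n).measurable.min measurable_const).stronglyMeasurable)
            (fun N ω => le_min (hMnn n ω) (Nat.cast_nonneg N))
            (fun N => ⟨N, fun ω => ?_⟩) (fun ω a b hab => ?_) ?_ ?_ ?_).1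
          · rw [Real.norm_of_nonneg (le_min (hMnn n ω) (Nat.cast_nonneg N))]
            exact min_le_right _ _
          · exact min_le_min le_rfl (Nat.cast_le.2 hab)
          · refine Eventually.of_forall fun ω => ?_
            obtain ⟨K, hK⟩ := exists_nat_ge (M n ω)
            refine Tendsto.congr' ?_ tendsto_const_nhds
            filter_upwards [eventually_ge_atTop K] with N hN
            exact (min_eq_left (hK.trans (Nat.cast_le.2 hN))).symm
          · exact (hMadp n).aestronglyMeasurable
          · intro N
            have heq1 : (fun ω => min (M n ω) (N:ℝ) * (μ[R (n+1)|ℱ n]) ω) =ᵐ[μ]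
                fun ω => min (M n ω) (N:ℝ) := by
              filter_upwards [hcondsucc n] with ω h
              simp only [h, mul_one]
            rw [integral_congr_ae heq1]
            have hmin : Integrable (fun ω => min (M n ω) (N:ℝ)) μ := by
              refine ih1.mono (((hMadp n).measurable.min measurable_const).mono
                (ℱ.le n) le_rfl).aestronglyMeasurable (Eventually.of_forall fun ω => ?_)
              rw [Real.norm_of_nonneg (le_min (hMnn n ω) (Nat.cast_nonneg N)),
                Real.norm_of_nonneg (hMnn n ω)]
              exact min_le_left _ _
            calc ∫ ω, min (M n ω) (N:ℝ) ∂μ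
                ≤ ∫ ω, M n ω ∂μ :=
                  integral_mono_ae hmin ih1 (Eventually.of_forall fun ω => min_le_left _ _)
              _ = 1 := ih2
        have hIsucc : Integrable (M (n+1)) μ := hMeq.symm ▸ hIc
        refine ⟨hIsucc, ?_⟩
        have hpull : μ[M (n+1)|ℱ n] =ᵐ[μ] M n := by
          have h1 : μ[M n * R (n+1)|ℱ n] =ᵐ[μ] M n * μ[R (n+1)|ℱ n] :=
            condExp_mul_of_stronglyMeasurable_left (hMadp n) (by exact hIc) (hRint (n+1))
          have h2 : μ[M (n+1)|ℱ n] = μ[M n * R (n+1)|ℱ n] := by rw [hMeq]; rfl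
          rw [h2]
          refine h1.trans ?_
          filter_upwards [hcondsucc n] with ω h
          show M n ω * (μ[R (n+1)|ℱ n]) ω = M n ω
          rw [h]; ring
        calc ∫ ω, M (n+1) ω ∂μ
            = ∫ ω, (μ[M (n+1)|ℱ n]) ω ∂μ := (integral_condExp (ℱ.le n)).symm
          _ = ∫ ω, M n ω ∂μ := integral_congr_ae hpull
          _ = 1 := ih2
  -- martingale
  have hpull : ∀ n, M n =ᵐ[μ] μ[M (n+1)|ℱ n] := by
    intro n
    have hMeq : M (n+1) = fun ω => M n ω * R (n+1) ω := funext (hMsucc n)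
    have h1 : μ[M n * R (n+1)|ℱ n] =ᵐ[μ] M n * μ[R (n+1)|ℱ n] :=
      condExp_mul_of_stronglyMeasurable_left (hMadp n) (by have := (hMkey (n+1)).1; rw [hMeq] at this; exact this) (hRint (n+1))
    have h2 : μ[M (n+1)|ℱ n] = μ[M n * R (n+1)|ℱ n] := by rw [hMeq]; rfl
    rw [h2]
    refine (h1.trans ?_).symm
    filter_upwards [hcondsucc n] with ω h
    show M n ω * (μ[R (n+1)|ℱ n]) ω = M n ω
    rw [h]; ring
  have hmart : Martingale M ℱ μ :=
    martingale_nat hMadp (fun n => (hMkey n).1) hpull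
  -- Doob maximal inequality
  set ε : ℝ≥0 := Real.toNNReal (1/δ) with hεdef
  have hεcoe : (ε : ℝ) = 1/δ := Real.coe_toNNReal _ (by positivity)
  have hmax := maximal_ineq hmart.submartingale (fun n ω => hMnn n ω) (ε := ε) T
  set S : Set Ω := {ω | (ε:ℝ) ≤ (Finset.range (T+1)).sup' Finset.nonempty_range_add_one
      fun k => M k ω} with hSdef
  have hS1 : (ε : ℝ≥0∞) * μ S ≤ 1 := by
    refine hmax.trans ?_
    calc ENNReal.ofReal (∫ ω in S, M T ω ∂μ)
        ≤ ENNReal.ofReal (∫ ω, M T ω ∂μ) :=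
          ENNReal.ofReal_le_ofReal
            (setIntegral_le_integral (hMkey T).1 (Eventually.of_forall (hMnn T)))
      _ = 1 := by rw [(hMkey T).2, ENNReal.ofReal_one]
  have hεE : (ε : ℝ≥0∞) = ENNReal.ofReal (1/δ) := rfl
  have hμS : μ S ≤ ENNReal.ofReal δ := by
    have hne : ENNReal.ofReal (1/δ) ≠ 0 := (ENNReal.ofReal_pos.2 (by positivity)).ne'
    calc μ S = (ENNReal.ofReal (1/δ))⁻¹ * (ENNReal.ofReal (1/δ) * μ S) := by
          rw [← mul_assoc, ENNReal.inv_mul_cancel hne ENNReal.ofReal_ne_top, one_mul]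
      _ ≤ (ENNReal.ofReal (1/δ))⁻¹ * 1 := by
          refine mul_le_mul_right ?_ _
          rw [← hεE]; exact hS1
      _ = ENNReal.ofReal δ := by
          rw [mul_one, one_div, ENNReal.ofReal_inv_of_pos hδ0, inv_inv]
  -- inclusion of the complement of the good event
  set A : Set Ω := {ω | ∀ T' ≤ T,
      ∑ t ∈ Finset.Icc 1 T', X t ω ≤
        ∑ t ∈ Finset.Icc 1 T', Real.log (Z t ω) + Real.log (1 / δ)} with hAdef
  have hsub2 : μ Aᶜ ≤ μ S := by
    refine measure_mono_ae ?_
    filter_upwards [ae_all_iff.2 hZpos] with ω hω hmem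
    have hmem2 : ¬ ∀ T' ≤ T, ∑ t ∈ Finset.Icc 1 T', X t ω ≤
        ∑ t ∈ Finset.Icc 1 T', Real.log (Z t ω) + Real.log (1/δ) := hmem
    push_neg at hmem2
    obtain ⟨T', hT', hgt⟩ := hmem2
    have hMval : M T' ω = Real.exp (∑ t ∈ Finset.Icc 1 T', (X t ω - Real.log (Z t ω))) := by
      rw [Real.exp_sum]
      refine Finset.prod_congr rfl fun t ht => ?_
      have hz := hω t
      have hw : W t ω = Z t ω := max_eq_left hz.le
      show (W t ω)⁻¹ * Real.exp (X t ω) = _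
      rw [Real.exp_sub, Real.exp_log hz, hw, div_eq_mul_inv, mul_comm]
    have hlt : 1/δ < M T' ω := by
      rw [hMval, Finset.sum_sub_distrib]
      calc 1/δ = Real.exp (Real.log (1/δ)) := (Real.exp_log (by positivity)).symm
        _ < _ := Real.exp_lt_exp.2 (by linarith)
    show ω ∈ S
    rw [hSdef]
    show (ε:ℝ) ≤ _
    rw [hεcoe]
    exact hlt.le.trans (Finset.le_sup' (f := fun k => M k ω)
      (Finset.mem_range.2 (Nat.lt_succ_of_le hT')))
  -- final arithmetic
  have h1le : (1:ℝ≥0∞) ≤ μ A + ENNReal.ofReal δ := by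
    calc (1:ℝ≥0∞) = μ Set.univ := (measure_univ).symm
      _ = μ (A ∪ Aᶜ) := by rw [Set.union_compl_self]
      _ ≤ μ A + μ Aᶜ := measure_union_le _ _
      _ ≤ μ A + ENNReal.ofReal δ := add_le_add le_rfl (hsub2.trans hμS)
  have hAfin : μ A ≠ ⊤ := (measure_lt_top μ A).ne
  have h2 : (1:ℝ) ≤ (μ A).toReal + δ := by
    have := ENNReal.toReal_mono (by
      exact ENNReal.add_ne_top.2 ⟨hAfin, ENNReal.ofReal_ne_top⟩) h1le
    rwa [ENNReal.toReal_one, ENNReal.toReal_add hAfin ENNReal.ofReal_ne_top,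
      ENNReal.toReal_ofReal hδ0.le] at this
  linarith
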